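/- Let Y be a linear subspace of a topological vector space X, C ⊆ Y a convex set open in the subspace topology of Y, and A ⊆ X an open convex set with A ∩ C ≠ ∅. Then conv(A ∪ C) is open in X. -/

import Mathlib

open Pointwise


theorem stmt_4 {X : Type*} [AddCommGroup X] [Module ℝ X] [TopologicalSpace X]
    [IsTopologicalAddGroup X] [ContinuousSMul ℝ X]
    (Y : Submodule ℝ X) (C A : Set X) (hCY : C ⊆ (Y : Set X)) (hCconv : Convex ℝ C)
    (hCopen : ∃ G : Set X, IsOpen G ∧ C = G ∩ (Y : Set X))
    (hAopen : IsOpen A) (hAconv : Convex ℝ A) (hne : (A ∩ C).Nonempty) :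
    IsOpen (convexHull ℝ (A ∪ C)) := by
  obtain ⟨x0, hx0A, hx0C⟩ := hne
  obtain ⟨G, hGopen, hGC⟩ := hCopen
  set K := convexHull ℝ (A ∪ C) with hK
  have hKconv : Convex ℝ K := convex_convexHull ℝ _
  -- key helper: any proper combination with a point of A is in the interior
  have key : ∀ t : ℝ, 0 < t → t ≤ 1 → ∀ a ∈ A, ∀ b ∈ K,
      t • a + (1 - t) • b ∈ interior K := by
    intro t ht0 ht1 a ha b hb
    rw [mem_interior]
    refine ⟨t • A + {(1 - t) • b}, ?_, ?_, ?_⟩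
    · rintro x ⟨u, ⟨a', ha', rfl⟩, v, hv, rfl⟩
      simp only [Set.mem_singleton_iff] at hv
      subst hv
      exact hKconv (subset_convexHull ℝ _ (Or.inl ha')) hb ht0.le (by linarith) (by ring)
    · exact (hAopen.smul₀ ht0.ne').add_right
    · exact Set.add_mem_add (Set.smul_mem_smul_set ha) rfl
  rw [← subset_interior_iff_isOpen]
  intro x hx
  rw [hK, (hAconv.convexHull_union hCconv ⟨x0, hx0A⟩ ⟨x0, hx0C⟩), mem_convexJoin] at hx
  obtain ⟨a, ha, c, hc, u, v, hu, hv, huv, rfl⟩ := hx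
  rcases eq_or_lt_of_le hu with hu0 | hu0
  · -- u = 0, so point is c ∈ C
    have hxc : u • a + v • c = c := by
      rw [← hu0]; have : v = 1 := by linarith
      rw [this]; simp
    rw [hxc]
    -- find ε > 0 with c + ε • (c - x0) ∈ C
    have hcG : c ∈ G := by rw [hGC] at hc; exact hc.1
    have hcont : Continuous fun ε : ℝ => c + ε • (c - x0) := by fun_prop
    have h0 : (fun ε : ℝ => c + ε • (c - x0)) 0 ∈ G := by simpa using hcG
    have : ∀ᶠ ε in nhds (0 : ℝ), c + ε • (c - x0) ∈ G :=
      hcont.continuousAt.eventually_mem (hGopen.mem_nhds h0)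
    obtain ⟨ε, hεG, hεpos⟩ :=
      ((this.filter_mono (nhdsWithin_le_nhds (s := Set.Ioi (0:ℝ)))).and
        self_mem_nhdsWithin).exists
    have hc'C : c + ε • (c - x0) ∈ C := by
      rw [hGC]
      exact ⟨hεG, Y.add_mem (hCY hc) (Y.smul_mem _ (Y.sub_mem (hCY hc) (hCY hx0C)))⟩
    have h1ε : (0:ℝ) < 1 + ε := by linarith
    have hrepr : c = (ε / (1 + ε)) • x0 + (1 - ε / (1 + ε)) • (c + ε • (c - x0)) := by
      match_scalars <;> field_simp <;> ring
    rw [hrepr]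
    exact key _ (by positivity) (by rw [div_le_one h1ε]; linarith) x0 hx0A _
      (subset_convexHull ℝ _ (Or.inr hc'C))
  · have hv' : v = 1 - u := by linarith
    rw [hv']
    exact key u hu0 (by linarith) a ha c (subset_convexHull ℝ _ (Or.inr hc))
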